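/- Let p be a prime, d ≥ 2, and let H be a finite-index additive subgroup of ℤ_p^d of level n, i.e. H ⊆ p^n·ℤ_p^d and H ⊄ p^{n+1}·ℤ_p^d. Then there exist two distinct additive subgroups K₁ ≠ K₂ contained in H with [H : Kᵢ] = p such that each Kᵢ also has level n (i.e. Kᵢ ⊆ p^n·ℤ_p^d and Kᵢ ⊄ p^{n+1}·ℤ_p^d). -/

import Mathlib

/-- The subgroup p^n·ℤ_p^d of ℤ_p^d, i.e. the range of multiplication by p^n. -/
noncomputable def pPowSubgroup (p : ℕ) [Fact p.Prime] (d n : ℕ) :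
    AddSubgroup (Fin d → ℤ_[p]) :=
  (DistribMulAction.toAddMonoidHom (Fin d → ℤ_[p]) ((p : ℤ_[p]) ^ n)).range

set_option maxHeartbeats 1000000 in
/-- Let p be a prime, d ≥ 2, and H a finite-index additive subgroup of ℤ_p^d of level n
(i.e. H ⊆ p^n·ℤ_p^d but H ⊄ p^(n+1)·ℤ_p^d). Then there are two distinct index-p
subgroups K₁ ≠ K₂ of H which also have level n. -/
theorem exists_two_index_p_subgroups_same_level
    (p : ℕ) [Fact p.Prime] (d n : ℕ) (hd : 2 ≤ d)
    (H : AddSubgroup (Fin d → ℤ_[p])) (hH : H.index ≠ 0)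
    (h1 : H ≤ pPowSubgroup p d n) (h2 : ¬ H ≤ pPowSubgroup p d (n + 1)) :
    ∃ K₁ K₂ : AddSubgroup (Fin d → ℤ_[p]), K₁ ≠ K₂ ∧ K₁ ≤ H ∧ K₂ ≤ H ∧
      (K₁.addSubgroupOf H).index = p ∧ (K₂.addSubgroupOf H).index = p ∧
      (K₁ ≤ pPowSubgroup p d n ∧ ¬ K₁ ≤ pPowSubgroup p d (n + 1)) ∧
      (K₂ ≤ pPowSubgroup p d n ∧ ¬ K₂ ≤ pPowSubgroup p d (n + 1)) := by
  classical
  have hp : p.Prime := Fact.out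
  set N := H.index with hNdef
  -- Step 1: N • x ∈ H for every x
  have hNsmul : ∀ x : Fin d → ℤ_[p], N • x ∈ H := fun x => H.nsmul_index_mem x
  -- Step 2: (N : ℤ_[p]) ∣ p ^ N
  have hdvd : (N : ℤ_[p]) ∣ (p : ℤ_[p]) ^ N := by
    set v := N.factorization p with hv
    have hu : ¬ p ∣ (N / p ^ v) := Nat.not_dvd_ordCompl hp hH
    have hunit : IsUnit ((N / p ^ v : ℕ) : ℤ_[p]) := by
      rw [PadicInt.isUnit_iff]
      have hle : ‖((N / p ^ v : ℕ) : ℤ_[p])‖ ≤ 1 := PadicInt.norm_le_one _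
      rcases lt_or_eq_of_le hle with hlt | heq
      · exfalso
        have : ((p : ℤ)) ∣ ((N / p ^ v : ℕ) : ℤ) := by
          have := (PadicInt.norm_int_lt_one_iff_dvd (p := p) ((N / p ^ v : ℕ) : ℤ)).mp
          simp only [Int.cast_natCast] at this
          exact this hlt
        exact hu (Int.ofNat_dvd.mp (by exact_mod_cast this))
      · exact heq
    have hvN : v ≤ N :=
      le_of_lt (lt_of_lt_of_le (Nat.lt_pow_self hp.one_lt : v < p ^ v) (Nat.ordProj_le p hH))
    have hcast : ((p : ℤ_[p]) ^ v) * ((N / p ^ v : ℕ) : ℤ_[p]) = (N : ℤ_[p]) := by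
      rw [hv, ← Nat.cast_pow, ← Nat.cast_mul, Nat.ordProj_mul_ordCompl_eq_self]
    obtain ⟨w, hw⟩ := hunit.dvd (a := (p : ℤ_[p]) ^ (N - v))
    refine ⟨w, ?_⟩
    calc (p : ℤ_[p]) ^ N = (p : ℤ_[p]) ^ v * (p : ℤ_[p]) ^ (N - v) := by
          rw [← pow_add, Nat.add_sub_cancel' hvN]
      _ = (p : ℤ_[p]) ^ v * (((N / p ^ v : ℕ) : ℤ_[p]) * w) := by rw [← hw]
      _ = ((p : ℤ_[p]) ^ v * ((N / p ^ v : ℕ) : ℤ_[p])) * w := by ring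
      _ = (N : ℤ_[p]) * w := by rw [hcast]
  -- Step 3: p ^ N • x ∈ H for every x
  have hfull : ∀ x : Fin d → ℤ_[p], ((p : ℤ_[p]) ^ N) • x ∈ H := by
    intro x
    obtain ⟨c, hc⟩ := hdvd
    have : ((p : ℤ_[p]) ^ N) • x = N • (c • x) := by
      rw [hc, mul_smul, Nat.cast_smul_eq_nsmul]
    rw [this]
    exact hNsmul _
  -- Step 4: H is a ℤ_[p]-submodule
  have hsmul : ∀ (c : ℤ_[p]) (x : Fin d → ℤ_[p]), x ∈ H → c • x ∈ H := by
    intro c x hx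
    have ha := PadicInt.appr_spec N c
    rw [Ideal.mem_span_singleton] at ha
    obtain ⟨t, ht⟩ := ha
    have hcx : c • x = ((c.appr N : ℤ_[p])) • x + (c - (c.appr N : ℤ_[p])) • x := by
      rw [← add_smul]; ring_nf
    rw [hcx]
    refine H.add_mem ?_ ?_
    · rw [Nat.cast_smul_eq_nsmul]
      exact H.nsmul_mem hx _
    · rw [ht, mul_smul]
      exact hfull _
  let H' : Submodule ℤ_[p] (Fin d → ℤ_[p]) :=
    { carrier := H
      add_mem' := fun ha hb => H.add_mem ha hb
      zero_mem' := H.zero_mem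
      smul_mem' := fun c x hx => hsmul c x hx }
  have hmemH' : ∀ x : Fin d → ℤ_[p], x ∈ H' ↔ x ∈ H := fun x => Iff.rfl
  -- Step 5: basis of H'
  obtain ⟨m, cB⟩ := Submodule.basisOfPid (Pi.basisFun ℤ_[p] (Fin d)) H'
  have hpPow_ne : ((p : ℤ_[p]) ^ N) ≠ 0 :=
    pow_ne_zero _ (Nat.cast_ne_zero.mpr hp.ne_zero)
  have hdm : d ≤ m := by
    have li : LinearIndependent ℤ_[p]
        (fun i : Fin d => (⟨((p : ℤ_[p]) ^ N) • (Pi.single (M := fun _ : Fin d => ℤ_[p]) i 1), hfull _⟩ : H')) := by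
      rw [Fintype.linearIndependent_iff]
      intro g hg i
      have hg' := congrArg (fun z : H' => (z : Fin d → ℤ_[p])) hg
      simp only [AddSubmonoidClass.coe_finset_sum, SetLike.val_smul, ZeroMemClass.coe_zero] at hg'
      have hgi := congrFun hg' i
      simp only [Finset.sum_apply, Pi.smul_apply, Pi.zero_apply, smul_eq_mul] at hgi
      rw [Finset.sum_eq_single i] at hgi
      · simp only [Pi.single_eq_same, mul_one] at hgi
        rcases mul_eq_zero.mp hgi with h | h
        · exact h
        · exact absurd h hpPow_ne
      · intro j _ hji
        simp [Pi.single_apply, hji]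
      · intro hi; exact absurd (Finset.mem_univ i) hi
    have := cB.card_le_card_of_linearIndependent li
    simpa using this
  have hm2 : 2 ≤ m := le_trans hd hdm
  set idx0 : Fin m := ⟨0, by omega⟩
  set idx1 : Fin m := ⟨1, by omega⟩
  have hidx : idx0 ≠ idx1 := by simp [idx0, idx1, Fin.ext_iff]
  -- coordinate homomorphisms mod p
  haveI : NeZero p := ⟨hp.ne_zero⟩
  let incl : ↥H →+ ↥H' := AddMonoidHom.mk' (fun h => ⟨h.1, h.2⟩) (fun a b => Subtype.ext rfl)
  let coord : Fin m → (↥H →+ ZMod p) := fun j =>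
    ((PadicInt.toZMod (p := p)).toAddMonoidHom.comp
      ((Finsupp.applyAddHom j).comp
        (cB.repr.toLinearMap.toAddMonoidHom.comp incl)))
  let cH : Fin m → ↥H := fun i => ⟨(cB i).1, (cB i).2⟩
  have hcoord : ∀ j i, coord j (cH i) = if i = j then 1 else 0 := by
    intro j i
    have hci : (incl (cH i)) = cB i := Subtype.ext rfl
    show PadicInt.toZMod ((cB.repr (incl (cH i))) j) = _
    rw [hci, cB.repr_self, Finsupp.single_apply]
    split <;> simp
  -- surjectivity criterion
  have hsurj : ∀ f : ↥H →+ ZMod p, (∃ x, f x = 1) → Function.Surjective f := by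
    rintro f ⟨x, hx⟩ y
    obtain ⟨j, rfl⟩ := ZMod.natCast_rightInverse.surjective y
    exact ⟨j • x, by rw [map_nsmul, hx, nsmul_eq_mul, mul_one]⟩
  -- kernel construction
  have hK : ∀ f : (↥H →+ ZMod p), Function.Surjective f →
      ((f.ker.map H.subtype) ≤ H ∧ (((f.ker.map H.subtype)).addSubgroupOf H).index = p ∧
       ∀ (x : Fin d → ℤ_[p]) (hx : x ∈ H), (x ∈ f.ker.map H.subtype ↔ f ⟨x, hx⟩ = 0)) := by
    intro f hf
    refine ⟨?_, ?_, ?_⟩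
    · rintro x ⟨y, hy, rfl⟩
      exact y.2
    · have he : ((f.ker.map H.subtype)).addSubgroupOf H = f.ker :=
        AddSubgroup.comap_map_eq_self_of_injective H.subtype_injective _
      rw [he, AddSubgroup.index_ker]
      have : f.range = ⊤ := by
        rw [AddMonoidHom.range_eq_top]
        exact hf
      rw [this]
      have : Nat.card (⊤ : AddSubgroup (ZMod p)) = Nat.card (ZMod p) :=
        Nat.card_congr AddSubgroup.topEquiv.toEquiv
      rw [this, Nat.card_zmod]
    · intro x hx
      constructor
      · rintro ⟨y, hy, h⟩
        have : y = ⟨x, hx⟩ := Subtype.ext h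
        rwa [← this]
      · intro h0
        exact ⟨⟨x, hx⟩, h0, rfl⟩
  -- the three homomorphisms
  have hs1 : Function.Surjective (coord idx0) :=
    hsurj _ ⟨cH idx0, by rw [hcoord, if_pos rfl]⟩
  have hs2 : Function.Surjective (coord idx1) :=
    hsurj _ ⟨cH idx1, by rw [hcoord, if_pos rfl]⟩
  have hs3 : Function.Surjective (coord idx0 + coord idx1) :=
    hsurj _ ⟨cH idx0, by
      rw [AddMonoidHom.add_apply, hcoord, hcoord, if_pos rfl, if_neg hidx]
      exact add_zero 1⟩
  obtain ⟨hle₁, hind₁, hmem₁⟩ := hK (coord idx0) hs1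
  obtain ⟨hle₂, hind₂, hmem₂⟩ := hK (coord idx1) hs2
  obtain ⟨hle₃, hind₃, hmem₃⟩ := hK (coord idx0 + coord idx1) hs3
  set K₁ := (coord idx0).ker.map H.subtype with hK₁
  set K₂ := (coord idx1).ker.map H.subtype with hK₂
  set K₃ := (coord idx0 + coord idx1).ker.map H.subtype with hK₃
  have hone : (1 : ZMod p) ≠ 0 := one_ne_zero
  have e10 : coord idx0 (cH idx0) = 1 := by rw [hcoord, if_pos rfl]
  have e11 : coord idx0 (cH idx1) = 0 := by rw [hcoord, if_neg hidx.symm]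
  have e20 : coord idx1 (cH idx0) = 0 := by rw [hcoord, if_neg hidx]
  have e21 : coord idx1 (cH idx1) = 1 := by rw [hcoord, if_pos rfl]
  have e30 : (coord idx0 + coord idx1) (cH idx0) = 1 := by
    rw [AddMonoidHom.add_apply, e10, e20, add_zero]
  have e31 : (coord idx0 + coord idx1) (cH idx1) = 1 := by
    rw [AddMonoidHom.add_apply, e11, e21, zero_add]
  -- distinctness
  have hne12 : K₁ ≠ K₂ := by
    intro h
    have hsub : (⟨((cH idx1 : ↥H) : Fin d → ℤ_[p]), (cH idx1).2⟩ : ↥H) = cH idx1 :=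
      Subtype.ext rfl
    have hmemK : ((cH idx1 : ↥H) : Fin d → ℤ_[p]) ∈ K₁ :=
      (hmem₁ _ (cH idx1).2).mpr (by rw [hsub]; exact e11)
    have hfin := (hmem₂ _ (cH idx1).2).mp (by rw [← h]; exact hmemK)
    rw [hsub, e21] at hfin
    exact hone hfin
  have hne13 : K₁ ≠ K₃ := by
    intro h
    have hsub : (⟨((cH idx1 : ↥H) : Fin d → ℤ_[p]), (cH idx1).2⟩ : ↥H) = cH idx1 :=
      Subtype.ext rfl
    have hmemK : ((cH idx1 : ↥H) : Fin d → ℤ_[p]) ∈ K₁ :=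
      (hmem₁ _ (cH idx1).2).mpr (by rw [hsub]; exact e11)
    have hfin := (hmem₃ _ (cH idx1).2).mp (by rw [← h]; exact hmemK)
    rw [hsub, e31] at hfin
    exact hone hfin
  have hne23 : K₂ ≠ K₃ := by
    intro h
    have hsub : (⟨((cH idx0 : ↥H) : Fin d → ℤ_[p]), (cH idx0).2⟩ : ↥H) = cH idx0 :=
      Subtype.ext rfl
    have hmemK : ((cH idx0 : ↥H) : Fin d → ℤ_[p]) ∈ K₂ :=
      (hmem₂ _ (cH idx0).2).mpr (by rw [hsub]; exact e20)
    have hfin := (hmem₃ _ (cH idx0).2).mp (by rw [← h]; exact hmemK)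
    rw [hsub, e30] at hfin
    exact hone hfin
  -- at most one bad subgroup
  have hbad : ∀ K K' : AddSubgroup (Fin d → ℤ_[p]), K ≤ H → K' ≤ H →
      (K.addSubgroupOf H).index = p → (K'.addSubgroupOf H).index = p →
      K ≤ pPowSubgroup p d (n+1) → K' ≤ pPowSubgroup p d (n+1) → K = K' := by
    intro K K' hKH hK'H hKi hK'i hKP hK'P
    set M := (H ⊓ pPowSubgroup p d (n+1)).addSubgroupOf H with hM
    have hMne : M ≠ ⊤ := by
      intro hMtop
      apply h2
      intro x hx
      have : (⟨x, hx⟩ : ↥H) ∈ M := by rw [hMtop]; trivial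
      rw [AddSubgroup.mem_addSubgroupOf] at this
      exact this.2
    have key : ∀ K₀ : AddSubgroup (Fin d → ℤ_[p]), K₀ ≤ H →
        (K₀.addSubgroupOf H).index = p → K₀ ≤ pPowSubgroup p d (n+1) →
        K₀.addSubgroupOf H = M := by
      intro K₀ hK₀H hK₀i hK₀P
      have hle : K₀.addSubgroupOf H ≤ M := by
        intro x hx
        rw [AddSubgroup.mem_addSubgroupOf] at hx ⊢
        exact ⟨hK₀H hx, hK₀P hx⟩
      have hdvd' : M.index ∣ p :=
        (AddSubgroup.index_dvd_of_le hle).trans (dvd_of_eq hK₀i)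
      rcases (Nat.Prime.eq_one_or_self_of_dvd hp _ hdvd') with h1' | hp'
      · exact absurd (AddSubgroup.index_eq_one.mp h1') hMne
      · have hrel := AddSubgroup.relIndex_mul_index hle
        rw [hp', hK₀i] at hrel
        have hr1 : (K₀.addSubgroupOf H).relIndex M = 1 :=
          Nat.eq_of_mul_eq_mul_right hp.pos (by rw [hrel, one_mul])
        exact le_antisymm hle (AddSubgroup.relIndex_eq_one.mp hr1)
    have heq := (key K hKH hKi hKP).trans (key K' hK'H hK'i hK'P).symm
    have recov : ∀ K₀ : AddSubgroup (Fin d → ℤ_[p]), K₀ ≤ H →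
        (K₀.addSubgroupOf H).map H.subtype = K₀ := by
      intro K₀ hK₀H
      rw [AddSubgroup.addSubgroupOf_map_subtype]
      exact inf_eq_left.mpr hK₀H
    rw [← recov K hKH, ← recov K' hK'H, heq]
  -- levels
  have hlev : ∀ K : AddSubgroup (Fin d → ℤ_[p]), K ≤ H → K ≤ pPowSubgroup p d n :=
    fun K hKH => le_trans hKH h1
  -- final case analysis
  by_cases b1 : K₁ ≤ pPowSubgroup p d (n+1)
  · have b2 : ¬ K₂ ≤ pPowSubgroup p d (n+1) := fun b2 =>
      hne12 (hbad K₁ K₂ hle₁ hle₂ hind₁ hind₂ b1 b2)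
    have b3 : ¬ K₃ ≤ pPowSubgroup p d (n+1) := fun b3 =>
      hne13 (hbad K₁ K₃ hle₁ hle₃ hind₁ hind₃ b1 b3)
    exact ⟨K₂, K₃, hne23, hle₂, hle₃, hind₂, hind₃,
      ⟨hlev K₂ hle₂, b2⟩, ⟨hlev K₃ hle₃, b3⟩⟩
  · by_cases b2 : K₂ ≤ pPowSubgroup p d (n+1)
    · have b3 : ¬ K₃ ≤ pPowSubgroup p d (n+1) := fun b3 =>
        hne23 (hbad K₂ K₃ hle₂ hle₃ hind₂ hind₃ b2 b3)
      exact ⟨K₁, K₃, hne13, hle₁, hle₃, hind₁, hind₃,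
        ⟨hlev K₁ hle₁, b1⟩, ⟨hlev K₃ hle₃, b3⟩⟩
    · exact ⟨K₁, K₂, hne12, hle₁, hle₂, hind₁, hind₂,
        ⟨hlev K₁ hle₁, b1⟩, ⟨hlev K₂ hle₂, b2⟩⟩
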